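/- SLL to superLL: let τ be the translation of {•}-formulas into {•,★}-formulas sending ! to !_• and ? to ?_• (and fixing all other connectives). Then every sequent ⊢ Γ provable in SLL has its translation ⊢ τ(Γ) provable in the SLL instance of superLL (E = {•,★}; de(★) true only; co_k(★,…,★,•) true for all k ≥ 0 and nothing else; dg empty; p_n(•) and p_n(★) true for all n); moreover if the SLL proof is cut-free then so is the obtained superLL proof. -/

import Mathlib

/-- Linear logic formulas with exponential connectives indexed by signatures in `E`. -/
inductive Formula (E : Type) : Type
  | var : ℕ → Formula E
  | covar : ℕ → Formula E
  | tens : Formula E → Formula E → Formula E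
  | parr : Formula E → Formula E → Formula E
  | one : Formula E
  | bot : Formula E
  | awith : Formula E → Formula E → Formula E
  | aplus : Formula E → Formula E → Formula E
  | top : Formula E
  | zero : Formula E
  | oc : E → Formula E → Formula E
  | wn : E → Formula E → Formula E

namespace Formula

/-- Duality on formulas. -/
def dual {E : Type} : Formula E → Formula E
  | var n => covar n
  | covar n => var n
  | tens A B => parr A.dual B.dual
  | parr A B => tens A.dual B.dual
  | one => bot
  | bot => one
  | awith A B => aplus A.dual B.dual
  | aplus A B => awith A.dual B.dual
  | top => zero
  | zero => top
  | oc e A => wn e A.dual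
  | wn e A => oc e A.dual

end Formula

/-- The sequent calculus superLL(E, de, co, dg, p).  The `Bool` index records whether
the cut rule may be used (`true` = cut allowed, `false` = cut-free proofs only). -/
inductive SuperLL {E : Type} (de : E → Prop) (co : List E → E → Prop)
    (dg : E → E → E → Prop) (p : ℕ → E → Prop) : Bool → List (Formula E) → Prop
  | ax (b) (A : Formula E) : SuperLL de co dg p b [A, A.dual]
  | ex {b Γ Δ} : SuperLL de co dg p b Γ → Γ.Perm Δ → SuperLL de co dg p b Δ
  | cut {A : Formula E} {Γ Δ : List (Formula E)} : SuperLL de co dg p true (A :: Γ) →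
      SuperLL de co dg p true (A.dual :: Δ) → SuperLL de co dg p true (Γ ++ Δ)
  | tens {b} {A B : Formula E} {Γ Δ : List (Formula E)} : SuperLL de co dg p b (A :: Γ) → SuperLL de co dg p b (B :: Δ) →
      SuperLL de co dg p b (A.tens B :: (Γ ++ Δ))
  | parr {b} {A B : Formula E} {Γ : List (Formula E)} : SuperLL de co dg p b (A :: B :: Γ) →
      SuperLL de co dg p b (A.parr B :: Γ)
  | one (b) : SuperLL de co dg p b [Formula.one]
  | bot {b Γ} : SuperLL de co dg p b Γ → SuperLL de co dg p b (Formula.bot :: Γ)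
  | awith {b} {A B : Formula E} {Γ : List (Formula E)} : SuperLL de co dg p b (A :: Γ) → SuperLL de co dg p b (B :: Γ) →
      SuperLL de co dg p b (A.awith B :: Γ)
  | aplus1 {b} {A B : Formula E} {Γ : List (Formula E)} : SuperLL de co dg p b (A :: Γ) →
      SuperLL de co dg p b (A.aplus B :: Γ)
  | aplus2 {b} {A B : Formula E} {Γ : List (Formula E)} : SuperLL de co dg p b (B :: Γ) →
      SuperLL de co dg p b (A.aplus B :: Γ)
  | top (b) (Γ) : SuperLL de co dg p b (Formula.top :: Γ)
  | der {b e A Γ} : de e → SuperLL de co dg p b (A :: Γ) →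
      SuperLL de co dg p b (Formula.wn e A :: Γ)
  | con {b} {l : List E} {e A Γ} : co l e →
      SuperLL de co dg p b (l.map (fun ei => Formula.wn ei A) ++ Γ) →
      SuperLL de co dg p b (Formula.wn e A :: Γ)
  | dig {b e1 e2 e A Γ} : dg e1 e2 e →
      SuperLL de co dg p b (Formula.wn e1 (Formula.wn e2 A) :: Γ) →
      SuperLL de co dg p b (Formula.wn e A :: Γ)
  | prom {b e A} {Δ : List (Formula E)} : p Δ.length e → SuperLL de co dg p b (A :: Δ) →
      SuperLL de co dg p b (Formula.oc e A :: Δ.map (Formula.wn e))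

/-- The two exponential signatures. -/
inductive Sig : Type
  | dot : Sig
  | star : Sig

inductive SLL : Bool → List (Formula Unit) → Prop
  | ax (b) (A : Formula Unit) : SLL b [A, A.dual]
  | ex {b Γ Δ} : SLL b Γ → Γ.Perm Δ → SLL b Δ
  | cut {A : Formula Unit} {Γ Δ : List (Formula Unit)} :
      SLL true (A :: Γ) → SLL true (A.dual :: Δ) → SLL true (Γ ++ Δ)
  | tens {b} {A B : Formula Unit} {Γ Δ : List (Formula Unit)} :
      SLL b (A :: Γ) → SLL b (B :: Δ) → SLL b (A.tens B :: (Γ ++ Δ))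
  | parr {b} {A B : Formula Unit} {Γ : List (Formula Unit)} :
      SLL b (A :: B :: Γ) → SLL b (A.parr B :: Γ)
  | one (b) : SLL b [Formula.one]
  | bot {b Γ} : SLL b Γ → SLL b (Formula.bot :: Γ)
  | awith {b} {A B : Formula Unit} {Γ : List (Formula Unit)} :
      SLL b (A :: Γ) → SLL b (B :: Γ) → SLL b (A.awith B :: Γ)
  | aplus1 {b} {A B : Formula Unit} {Γ : List (Formula Unit)} :
      SLL b (A :: Γ) → SLL b (A.aplus B :: Γ)
  | aplus2 {b} {A B : Formula Unit} {Γ : List (Formula Unit)} :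
      SLL b (B :: Γ) → SLL b (A.aplus B :: Γ)
  | top (b) (Γ) : SLL b (Formula.top :: Γ)
  | promf {b} {A : Formula Unit} {Δ : List (Formula Unit)} :
      SLL b (A :: Δ) → SLL b (Formula.oc () A :: Δ.map (Formula.wn ()))
  | mpx {b} (k : ℕ) {A : Formula Unit} {Γ : List (Formula Unit)} :
      SLL b (List.replicate k A ++ Γ) → SLL b (Formula.wn () A :: Γ)

/-- The SLL instance of superLL: `E = {•,★}`, `de(★)` only, `co_k(★,…,★,•)` for all
`k` and nothing else, `dg` empty, `p_n` full. -/
def deSLL : Sig → Prop := fun e => e = Sig.star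
def coSLL : List Sig → Sig → Prop := fun l e => (∀ x ∈ l, x = Sig.star) ∧ e = Sig.dot
def dgSLL : Sig → Sig → Sig → Prop := fun _ _ _ => False
def pSLL : ℕ → Sig → Prop := fun _ _ => True

/-- Translation of `{•}`-formulas into `{•,★}`-formulas sending `!` to `!_•` and `?`
to `?_•`. -/
def tau : Formula Unit → Formula Sig
  | Formula.var n => Formula.var n
  | Formula.covar n => Formula.covar n
  | Formula.tens A B => Formula.tens (tau A) (tau B)
  | Formula.parr A B => Formula.parr (tau A) (tau B)
  | Formula.one => Formula.one
  | Formula.bot => Formula.bot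
  | Formula.awith A B => Formula.awith (tau A) (tau B)
  | Formula.aplus A B => Formula.aplus (tau A) (tau B)
  | Formula.top => Formula.top
  | Formula.zero => Formula.zero
  | Formula.oc _ A => Formula.oc Sig.dot (tau A)
  | Formula.wn _ A => Formula.wn Sig.dot (tau A)

lemma tau_dual (A : Formula Unit) : tau A.dual = (tau A).dual := by
  induction A <;> simp [tau, Formula.dual, *]

lemma der_star_many {b : Bool} (k : ℕ) (A : Formula Sig) (Γ : List (Formula Sig)) :
    SuperLL deSLL coSLL dgSLL pSLL b (List.replicate k A ++ Γ) →
    SuperLL deSLL coSLL dgSLL pSLL b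
      (List.replicate k (Formula.wn Sig.star A) ++ Γ) := by
  induction k generalizing Γ with
  | zero => simp
  | succ n ih =>
    intro h
    rw [List.replicate_succ] at h ⊢
    have h1 : SuperLL deSLL coSLL dgSLL pSLL b
        (Formula.wn Sig.star A :: (List.replicate n A ++ Γ)) :=
      SuperLL.der rfl h
    have h2 := SuperLL.ex h1 List.perm_middle.symm
    have h3 := ih (Formula.wn Sig.star A :: Γ) h2
    exact SuperLL.ex h3 List.perm_middle

/-- SLL to superLL: every SLL-provable sequent translates to a provable sequent of the
SLL instance of superLL, preserving cut-freeness. -/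
theorem SLL_to_superLL :
    ∀ (b : Bool) (Γ : List (Formula Unit)),
      SLL b Γ → SuperLL deSLL coSLL dgSLL pSLL b (Γ.map tau) := by
  intro b Γ h
  induction h with
  | ax b A => simpa [tau_dual] using SuperLL.ax b (tau A)
  | ex h hp ih => exact SuperLL.ex ih (hp.map tau)
  | cut h1 h2 ih1 ih2 =>
    rw [List.map_append]
    exact SuperLL.cut ih1 (by simpa [tau_dual] using ih2)
  | tens h1 h2 ih1 ih2 =>
    simpa [tau] using SuperLL.tens (by simpa using ih1) (by simpa using ih2)
  | parr h ih => exact SuperLL.parr (by simpa using ih)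
  | one b => exact SuperLL.one b
  | bot h ih => exact SuperLL.bot ih
  | awith h1 h2 ih1 ih2 => exact SuperLL.awith (by simpa using ih1) (by simpa using ih2)
  | aplus1 h ih => exact SuperLL.aplus1 (by simpa using ih)
  | aplus2 h ih => exact SuperLL.aplus2 (by simpa using ih)
  | top b Γ => exact SuperLL.top b _
  | promf h ih =>
    have := SuperLL.prom (p := pSLL) (e := Sig.dot) trivial (by simpa using ih)
    simpa [tau, List.map_map, Function.comp_def] using this
  | mpx k h ih =>
    refine SuperLL.con (l := List.replicate k Sig.star)
      ⟨fun x hx => List.eq_of_mem_replicate hx, rfl⟩ ?_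
    have := der_star_many k _ _ (by simpa using ih)
    simpa [List.map_replicate] using this
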